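/- Let H be an infinite group with no nontrivial finite normal subgroups, I a set, and K a group acting faithfully on I. Then the generalized wreath product H ≀_I K = H^{⊕I} ⋊ K has no nontrivial finite normal subgroups. -/
import Mathlib


/-- The subgroup `H^{⊕I}` of `H^I` consisting of finitely supported functions. -/
def finSupportSubgroup (I : Type*) (H : Type*) [Group H] : Subgroup (I → H) where
  carrier := {x | (Function.mulSupport x).Finite}
  one_mem' := by
    simp [Function.mulSupport_one]
  mul_mem' := by
    intro a b ha hb
    exact Set.Finite.subset (ha.union hb) (Function.mulSupport_mul a b)
  inv_mem' := by
    intro a ha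
    simpa [Function.mulSupport_inv] using ha

/-- The action of `K` on `H^{⊕I}` by permuting coordinates, as a homomorphism
`K →* MulAut (H^{⊕I})`, defining the generalized wreath product `H ≀_I K`. -/
def wreathAction (I H K : Type*) [Group H] [Group K] [MulAction K I] :
    K →* MulAut ↥(finSupportSubgroup I H) where
  toFun k :=
    { toFun := fun x => ⟨fun i => x.1 (k⁻¹ • i), by
        show (Function.mulSupport (x.1 ∘ fun i => k⁻¹ • i)).Finite
        rw [Function.mulSupport_comp_eq_preimage x.1 fun i => k⁻¹ • i]
        exact Set.Finite.preimage (MulAction.injective (k⁻¹ : K)).injOn x.2⟩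
      invFun := fun x => ⟨fun i => x.1 (k • i), by
        show (Function.mulSupport (x.1 ∘ fun i => k • i)).Finite
        rw [Function.mulSupport_comp_eq_preimage x.1 fun i => k • i]
        exact Set.Finite.preimage (MulAction.injective k).injOn x.2⟩
      left_inv := by
        intro x
        apply Subtype.ext
        funext i
        simp
      right_inv := by
        intro x
        apply Subtype.ext
        funext i
        simp
      map_mul' := by
        intro x y
        rfl }
  map_one' := by
    apply MulEquiv.ext
    intro x
    apply Subtype.ext
    funext i
    simp
  map_mul' := by
    intro k₁ k₂
    apply MulEquiv.ext
    intro x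
    apply Subtype.ext
    funext i
    simp [mul_smul]


section Aux

open scoped Classical

variable {I H K : Type*} [Group H] [Group K] [MulAction K I]

/-- The delta function at `i` with value `a`, as an element of `H^{⊕I}`. -/
noncomputable def deltaFS (i : I) (a : H) : ↥(finSupportSubgroup I H) :=
  ⟨fun j => if j = i then a else 1, by
    apply Set.Finite.subset (Set.finite_singleton i)
    intro j hj
    by_contra hji
    simp only [Set.mem_singleton_iff] at hji
    exact hj (if_neg hji)⟩

@[simp] lemma deltaFS_apply_self (i : I) (a : H) : (deltaFS i a).1 i = a := by simp [deltaFS]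

@[simp] lemma deltaFS_apply_ne (i j : I) (a : H) (h : j ≠ i) : (deltaFS i a).1 j = 1 := by simp [deltaFS, h]

lemma deltaFS_inv_apply (i j : I) (a : H) : ((deltaFS i a)⁻¹).1 j = if j = i then a⁻¹ else 1 := by
  by_cases h : j = i
  · subst h; simp [deltaFS]
  · simp [deltaFS, h]

abbrev WP (I H K : Type*) [Group H] [Group K] [MulAction K I] :=
  SemidirectProduct ↥(finSupportSubgroup I H) K (wreathAction I H K)

lemma wa_apply (k : K) (x : ↥(finSupportSubgroup I H)) (i : I) :
    ((wreathAction I H K k) x).1 i = x.1 (k⁻¹ • i) := rfl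

lemma conj_left_apply (i : I) (a : H) (g : WP I H K) :
    ((SemidirectProduct.inl (deltaFS i a) * g * (SemidirectProduct.inl (deltaFS i a))⁻¹).left).1 i
      = a * g.left.1 i * (if g.right⁻¹ • i = i then a⁻¹ else 1) := by
  have h1 : (SemidirectProduct.inl (deltaFS i a) * g * (SemidirectProduct.inl (deltaFS i a))⁻¹
      : WP I H K).left
      = deltaFS i a * g.left * (wreathAction I H K g.right) (deltaFS i a)⁻¹ := by
    simp [mul_assoc]
  rw [h1]
  show (deltaFS i a).1 i * g.left.1 i * ((wreathAction I H K g.right) (deltaFS i a)⁻¹).1 i = _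
  rw [wa_apply, deltaFS_apply_self, deltaFS_inv_apply]

lemma conj_right (i : I) (a : H) (g : WP I H K) :
    (SemidirectProduct.inl (deltaFS i a) * g * (SemidirectProduct.inl (deltaFS i a))⁻¹
      : WP I H K).right = g.right := by
  simp

end Aux

theorem wreath_product_no_finite_normal_subgroups
    (I H K : Type*) [Group H] [Group K] [MulAction K I] [FaithfulSMul K I]
    [Infinite H]
    (hH : ∀ N : Subgroup H, N.Normal → (N : Set H).Finite → N = ⊥) :
    ∀ N : Subgroup (SemidirectProduct ↥(finSupportSubgroup I H) K (wreathAction I H K)),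
      N.Normal → (N : Set (SemidirectProduct ↥(finSupportSubgroup I H) K
        (wreathAction I H K))).Finite → N = ⊥ := by
  intro N hN hfin
  haveI : Finite ↥N := hfin.to_subtype
  -- Step 1: every element of N has trivial K-component
  have key : ∀ g ∈ N, g.right = (1 : K) := by
    intro g hg
    have hfix : ∀ i : I, g.right • i = i := by
      intro i
      by_contra hne
      have hne' : g.right⁻¹ • i ≠ i := fun h => hne (by
        conv_lhs => rw [← h]
        simp)
      have hmem : ∀ a : H,
          SemidirectProduct.inl (deltaFS i a) * g * (SemidirectProduct.inl (deltaFS i a))⁻¹ ∈ N :=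
        fun a => hN.conj_mem g hg _
      have hinj : Function.Injective (fun a : H => (⟨_, hmem a⟩ : ↥N)) := by
        intro a b hab
        have := congrArg (fun x : ↥N => ((x : WP I H K).left).1 i) hab
        simp only [conj_left_apply, if_neg hne', mul_one] at this
        exact mul_right_cancel this
      haveI := Finite.of_injective _ hinj
      exact not_finite H
    exact eq_of_smul_eq_smul (fun i : I => by rw [hfix i, one_smul])
  -- Step 2: every element of N has trivial H^{⊕I}-component
  ext g
  simp only [Subgroup.mem_bot]
  constructor
  · intro hg
    have hg1 : g.right = 1 := key g hg
    have hleft : ∀ i : I, g.left.1 i = 1 := by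
      intro i
      set M : Subgroup H :=
        { carrier := (fun x : WP I H K => x.left.1 i) '' (N : Set (WP I H K))
          one_mem' := ⟨1, N.one_mem, rfl⟩
          mul_mem' := by
            rintro x y ⟨g₁, hg₁, rfl⟩ ⟨g₂, hg₂, rfl⟩
            refine ⟨g₁ * g₂, N.mul_mem hg₁ hg₂, ?_⟩
            show ((g₁ * g₂).left).1 i = g₁.left.1 i * g₂.left.1 i
            rw [SemidirectProduct.mul_left]
            show g₁.left.1 i * ((wreathAction I H K g₁.right) g₂.left).1 i = _
            rw [wa_apply, key g₁ hg₁]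
            simp
          inv_mem' := by
            rintro x ⟨g', hg', rfl⟩
            refine ⟨g'⁻¹, N.inv_mem hg', ?_⟩
            show (g'⁻¹.left).1 i = (g'.left.1 i)⁻¹
            rw [SemidirectProduct.inv_left]
            show ((wreathAction I H K g'.right⁻¹) g'.left⁻¹).1 i = _
            rw [wa_apply, key g' hg']
            simp } with hM
      have hMnormal : M.Normal := by
        constructor
        rintro x ⟨g', hg', rfl⟩ a
        refine ⟨SemidirectProduct.inl (deltaFS i a) * g' * (SemidirectProduct.inl (deltaFS i a))⁻¹,
          hN.conj_mem g' hg' _, ?_⟩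
        show (SemidirectProduct.inl (deltaFS i a) * g' * (SemidirectProduct.inl (deltaFS i a))⁻¹
          : WP I H K).left.1 i = a * g'.left.1 i * a⁻¹
        rw [conj_left_apply]
        rw [key g' hg']
        simp
      have hMfin : (M : Set H).Finite := hfin.image _
      have hM0 : g.left.1 i ∈ M := ⟨g, hg, rfl⟩
      rw [hH M hMnormal hMfin] at hM0
      exact hM0
    have hgl : g.left = 1 := Subtype.ext (funext fun i => hleft i)
    have : g = SemidirectProduct.inl g.left * SemidirectProduct.inr g.right :=
      (SemidirectProduct.inl_left_mul_inr_right g).symm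
    rw [this, hgl, hg1]
    simp
  · rintro rfl
    exact N.one_mem
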